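/- arXiv:1604.07948 — 3 statements merged into one kernel-verified Lean document; each statement's English description precedes it below -/
import Mathlib

section
/- Let g ∈ ℝ², β > 0, γ ∈ ℝ, and set G = g gᵀ + β I and D = G⁻¹ (√(det G))^{2γ−1}. Then D is symmetric positive definite; g is an eigenvector of D with eigenvalue λ_∥ = β^{γ−1/2} (‖g‖₂² + β)^{γ−3/2}; every vector orthogonal to g is an eigenvector with eigenvalue λ_⊥ = β^{γ−3/2} (‖g‖₂² + β)^{γ−1/2}; and the ratio satisfies λ_∥/λ_⊥ = β/(‖g‖₂² + β) ≤ 1, with equality if and only if g = 0 (in which case λ_∥ = λ_⊥ and D is a multiple of the identity). Hence diffusion with tensor D is slower across the estimated gradient direction than along it whenever ‖g‖₂ > 0 (edge preservation). -/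
open Matrix Real

/-- Properties of the diffusion tensor `D = G⁻¹ (√(det G))^{2γ-1}` for the optimal
metric `G = g gᵀ + β I`: `D` is symmetric positive definite; `g` is an eigenvector
with eigenvalue `λ∥ = β^{γ-1/2} (‖g‖₂² + β)^{γ-3/2}`; vectors orthogonal to `g` are
eigenvectors with eigenvalue `λ⊥ = β^{γ-3/2} (‖g‖₂² + β)^{γ-1/2}`; the ratio is
`λ∥/λ⊥ = β/(‖g‖₂² + β) ≤ 1`, with equality iff `g = 0`, in which case `D` is a
multiple of the identity. -/
theorem stmt_11 (g : Fin 2 → ℝ) (β γ : ℝ) (hβ : 0 < β)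
    (G D : Matrix (Fin 2) (Fin 2) ℝ)
    (hG : G = Matrix.vecMulVec g g + β • 1)
    (hD : D = (Real.sqrt G.det) ^ (2 * γ - 1) • G⁻¹) :
    D.PosDef ∧
    D *ᵥ g = (β ^ (γ - 1/2) * (g ⬝ᵥ g + β) ^ (γ - 3/2)) • g ∧
    (∀ v : Fin 2 → ℝ, g ⬝ᵥ v = 0 →
      D *ᵥ v = (β ^ (γ - 3/2) * (g ⬝ᵥ g + β) ^ (γ - 1/2)) • v) ∧
    (β ^ (γ - 1/2) * (g ⬝ᵥ g + β) ^ (γ - 3/2))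
        / (β ^ (γ - 3/2) * (g ⬝ᵥ g + β) ^ (γ - 1/2))
      = β / (g ⬝ᵥ g + β) ∧
    β / (g ⬝ᵥ g + β) ≤ 1 ∧
    (β / (g ⬝ᵥ g + β) = 1 ↔ g = 0) ∧
    (g = 0 → D = (β ^ (2 * γ - 2)) • 1) := by
  set s : ℝ := g ⬝ᵥ g with hs_def
  have hs : 0 ≤ s := by
    simp only [hs_def, dotProduct, Fin.sum_univ_two]
    exact add_nonneg (mul_self_nonneg _) (mul_self_nonneg _)
  have hsum : 0 < s + β := by linarith
  -- action of G on vectors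
  have hGv : ∀ x : Fin 2 → ℝ, G *ᵥ x = (g ⬝ᵥ x) • g + β • x := by
    intro x
    rw [hG, add_mulVec, smul_mulVec, one_mulVec]
    congr 1
    funext i
    simp only [mulVec, dotProduct, vecMulVec_apply, Pi.smul_apply, smul_eq_mul,
      Fin.sum_univ_two]
    ring
  -- G is positive definite
  have hGpd : G.PosDef := by
    rw [hG]
    refine Matrix.PosDef.posSemidef_add ?_ ?_
    · refine Matrix.posSemidef_iff_dotProduct_mulVec.mpr ⟨?_, fun x => ?_⟩
      · ext i j
        simp [Matrix.IsHermitian, vecMulVec_apply, mul_comm]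
      · have h1 : star x ⬝ᵥ (vecMulVec g g *ᵥ x) = (g ⬝ᵥ x) ^ 2 := by
          simp only [dotProduct, mulVec, vecMulVec_apply, Fin.sum_univ_two,
            Pi.star_apply, star_trivial]
          ring
        rw [h1]
        positivity
    · refine Matrix.posDef_iff_dotProduct_mulVec.mpr ⟨?_, fun x hx => ?_⟩
      · ext i j
        simp only [Matrix.conjTranspose_apply, Matrix.smul_apply, Matrix.one_apply,
          star_trivial, smul_eq_mul]
        rcases eq_or_ne i j with rfl | h
        · simp
        · simp [h, Ne.symm h]
      · have h1 : star x ⬝ᵥ ((β • (1 : Matrix (Fin 2) (Fin 2) ℝ)) *ᵥ x) = β * (x ⬝ᵥ x) := by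
          simp only [smul_mulVec, one_mulVec, dotProduct, Pi.smul_apply,
            Pi.star_apply, star_trivial, smul_eq_mul, Fin.sum_univ_two]
          ring
        rw [h1]
        have hxx : 0 < x ⬝ᵥ x := by
          have hne : x ⬝ᵥ x ≠ 0 := fun h => hx (dotProduct_self_eq_zero.mp h)
          have h0 : 0 ≤ x ⬝ᵥ x := by
            simp only [dotProduct, Fin.sum_univ_two]
            exact add_nonneg (mul_self_nonneg _) (mul_self_nonneg _)
          exact lt_of_le_of_ne h0 (Ne.symm hne)
        exact mul_pos hβ hxx
  have hdet : G.det = β * (s + β) := by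
    rw [hG]
    simp only [Matrix.det_fin_two, Matrix.add_apply, vecMulVec_apply, Matrix.smul_apply,
      Matrix.one_apply, hs_def, dotProduct, Fin.sum_univ_two]
    norm_num
    ring
  have hdet_pos : 0 < G.det := hdet ▸ mul_pos hβ hsum
  have hdet_unit : IsUnit G.det := (ne_of_gt hdet_pos).isUnit
  -- the scalar
  set c : ℝ := (Real.sqrt G.det) ^ (2 * γ - 1) with hc_def
  have hc : c = β ^ (γ - 1/2) * (s + β) ^ (γ - 1/2) := by
    rw [hc_def, hdet, Real.sqrt_eq_rpow, ← Real.rpow_mul (by positivity),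
      show (1/2 * (2 * γ - 1) : ℝ) = γ - 1/2 by ring,
      Real.mul_rpow hβ.le hsum.le]
  have hc_pos : 0 < c := by
    rw [hc]
    exact mul_pos (Real.rpow_pos_of_pos hβ _) (Real.rpow_pos_of_pos hsum _)
  -- inverse action
  have hGinv : ∀ (x : Fin 2 → ℝ) (lam : ℝ), lam ≠ 0 → G *ᵥ x = lam • x →
      G⁻¹ *ᵥ x = lam⁻¹ • x := by
    intro x lam hlam h
    have h2 : G⁻¹ *ᵥ (G *ᵥ x) = G⁻¹ *ᵥ (lam • x) := by rw [h]
    rw [mulVec_mulVec, Matrix.nonsing_inv_mul G hdet_unit, one_mulVec, mulVec_smul] at h2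
    exact ((inv_smul_eq_iff₀ hlam).mpr h2).symm
  have hDg : D *ᵥ g = (β ^ (γ - 1/2) * (s + β) ^ (γ - 3/2)) • g := by
    have h1 : G *ᵥ g = (s + β) • g := by
      rw [hGv g, ← hs_def, add_smul]
    rw [hD, smul_mulVec, hGinv g (s + β) hsum.ne' h1, smul_smul, hc, mul_assoc,
      ← Real.rpow_neg_one (s + β), ← Real.rpow_add hsum,
      show (γ - 1/2 + -1 : ℝ) = γ - 3/2 by ring]
  have hDperp : ∀ v : Fin 2 → ℝ, g ⬝ᵥ v = 0 →
      D *ᵥ v = (β ^ (γ - 3/2) * (s + β) ^ (γ - 1/2)) • v := by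
    intro v hv
    have h1 : G *ᵥ v = β • v := by rw [hGv v, hv, zero_smul, zero_add]
    rw [hD, smul_mulVec, hGinv v β hβ.ne' h1, smul_smul, hc,
      mul_comm (β ^ (γ - 1/2 : ℝ)) ((s + β) ^ (γ - 1/2 : ℝ)), mul_assoc,
      ← Real.rpow_neg_one β, ← Real.rpow_add hβ,
      show (γ - 1/2 + -1 : ℝ) = γ - 3/2 by ring,
      mul_comm ((s + β) ^ (γ - 1/2 : ℝ)) (β ^ (γ - 3/2 : ℝ))]
  have hDpd : D.PosDef := by
    have hinv : G⁻¹.PosDef := hGpd.inv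
    rw [hD]
    refine Matrix.posDef_iff_dotProduct_mulVec.mpr ⟨?_, fun x hx => ?_⟩
    · unfold Matrix.IsHermitian
      rw [conjTranspose_smul, hinv.isHermitian.eq, star_trivial]
    · rw [smul_mulVec, dotProduct_smul, smul_eq_mul]
      exact mul_pos hc_pos (hinv.dotProduct_mulVec_pos hx)
  refine ⟨hDpd, hDg, hDperp, ?_, ?_, ?_, ?_⟩
  · rw [mul_div_mul_comm, ← Real.rpow_sub hβ, ← Real.rpow_sub hsum,
      show (γ - 1/2 - (γ - 3/2) : ℝ) = 1 by ring,
      show (γ - 3/2 - (γ - 1/2) : ℝ) = -1 by ring,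
      Real.rpow_one, Real.rpow_neg_one, ← div_eq_mul_inv]
  · exact (div_le_one hsum).mpr (by linarith)
  · constructor
    · intro h
      have h1 : β = s + β := (div_eq_one_iff_eq hsum.ne').mp h
      have h2 : s = 0 := by linarith
      exact dotProduct_self_eq_zero.mp (hs_def ▸ h2)
    · intro h
      have h2 : s = 0 := by rw [hs_def, h]; simp
      rw [h2, zero_add, div_self hβ.ne']
  · intro h
    have h2 : s = 0 := by rw [hs_def, h]; simp
    have hG1 : G = β • 1 := by
      rw [hG, h]
      have : vecMulVec (0 : Fin 2 → ℝ) (0 : Fin 2 → ℝ) = (0 : Matrix (Fin 2) (Fin 2) ℝ) := by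
        ext i j; simp [vecMulVec_apply]
      rw [this, zero_add]
    have hGinv1 : G⁻¹ = β⁻¹ • 1 := by
      apply Matrix.inv_eq_right_inv
      rw [hG1, Matrix.smul_mul, Matrix.mul_smul, one_mul, smul_smul,
        mul_inv_cancel₀ hβ.ne', one_smul]
    rw [hD, hGinv1, smul_smul]
    congr 1
    rw [hc, h2, zero_add, ← Real.rpow_add hβ, ← Real.rpow_neg_one β,
      ← Real.rpow_add hβ, show (γ - 1/2 + (γ - 1/2) + -1 : ℝ) = 2 * γ - 2 by ring]
end

section
/- Let β > 0 and γ < 1, define λ₁(s) = (1 + s²/β²)^{γ−3/2}, J₁(s) = s·λ₁(s), and the contrast parameter T = β/√(2(1−γ)). Then: (i) J₁′(s) > 0 for all 0 ≤ s < T (forward diffusion across edges); (ii) J₁′(T) = 0 (no diffusion across edges); and (iii) J₁′(s) < 0 for all s > T (backward diffusion across edges). In particular T is the unique nonnegative zero of J₁′. -/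
lemma deriv_flux (β γ : ℝ) (hβ : 0 < β) (s : ℝ) :
    deriv (fun s : ℝ => s * (1 + s ^ 2 / β ^ 2) ^ (γ - 3/2)) s
      = (1 + s ^ 2 / β ^ 2) ^ (γ - 5/2) * (1 + (2 * γ - 2) * s ^ 2 / β ^ 2) := by
  have hP : 0 < 1 + s ^ 2 / β ^ 2 := by positivity
  have h1 : HasDerivAt (fun s : ℝ => 1 + s ^ 2 / β ^ 2) (2 * s / β ^ 2) s := by
    have := ((hasDerivAt_pow 2 s).div_const (β ^ 2)).const_add 1
    simpa using this
  have h2 := h1.rpow_const (p := γ - 3/2) (Or.inl hP.ne')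
  have h3 := (hasDerivAt_id s).mul h2
  have hd := h3.deriv
  simp only [id_eq] at hd
  rw [show (fun s : ℝ => s * (1 + s ^ 2 / β ^ 2) ^ (γ - 3/2)) = (id * fun y => (1 + y ^ 2 / β ^ 2) ^ (γ - 3 / 2)) from rfl, hd]
  have he : γ - 3/2 - 1 = γ - 5/2 := by ring
  have hsplit : (1 + s ^ 2 / β ^ 2) ^ (γ - 3/2)
      = (1 + s ^ 2 / β ^ 2) ^ (γ - 5/2) * (1 + s ^ 2 / β ^ 2) := by
    rw [show γ - 3/2 = (γ - 5/2) + 1 by ring, Real.rpow_add hP, Real.rpow_one]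
  rw [he, hsplit]
  field_simp
  ring

/-- Forward–backward diffusion for `γ < 1`: with flux `J₁(s) = s (1+s²/β²)^{γ-3/2}`
and contrast parameter `T = β/√(2(1-γ))`, the across-edge diffusivity `J₁'` is
positive on `[0, T)` (forward diffusion), vanishes at `T`, is negative on `(T, ∞)`
(backward diffusion), and `T` is the unique nonnegative zero of `J₁'`. -/
theorem stmt_14 (β γ : ℝ) (hβ : 0 < β) (hγ : γ < 1)
    (J : ℝ → ℝ) (hJ : J = fun s => s * (1 + s ^ 2 / β ^ 2) ^ (γ - 3/2))
    (T : ℝ) (hT : T = β / Real.sqrt (2 * (1 - γ))) :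
    (∀ s : ℝ, 0 ≤ s → s < T → 0 < deriv J s) ∧
    deriv J T = 0 ∧
    (∀ s : ℝ, T < s → deriv J s < 0) ∧
    (∀ s : ℝ, 0 ≤ s → deriv J s = 0 → s = T) := by
  subst hJ hT
  have hγ' : 0 < 2 * (1 - γ) := by linarith
  have hs : 0 < Real.sqrt (2 * (1 - γ)) := Real.sqrt_pos.mpr hγ'
  set T := β / Real.sqrt (2 * (1 - γ)) with hTdef
  have hT0 : 0 < T := div_pos hβ hs
  have hT2 : T ^ 2 = β ^ 2 / (2 * (1 - γ)) := by
    rw [hTdef, div_pow, Real.sq_sqrt hγ'.le]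
  have hkey : ∀ s : ℝ, (2 * (1 - γ)) * T ^ 2 = β ^ 2 := by
    intro s; rw [hT2]; field_simp; exact div_self (sub_ne_zero.mpr (ne_of_gt hγ))
  have hβ2 : (0:ℝ) < β ^ 2 := by positivity
  have hfac : ∀ s : ℝ, 1 + (2 * γ - 2) * s ^ 2 / β ^ 2
      = (2 * (1 - γ)) * (T ^ 2 - s ^ 2) / β ^ 2 := by
    intro s
    have := hkey s
    field_simp
    nlinarith [this]
  have hApos : ∀ s : ℝ, 0 < (1 + s ^ 2 / β ^ 2) ^ (γ - 5/2) := by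
    intro s
    exact Real.rpow_pos_of_pos (by positivity) _
  refine ⟨?_, ?_, ?_, ?_⟩
  · intro s hs0 hsT
    rw [deriv_flux β γ hβ s, hfac s]
    have h2 : 0 < T ^ 2 - s ^ 2 := by nlinarith
    have : 0 < (2 * (1 - γ)) * (T ^ 2 - s ^ 2) / β ^ 2 := by positivity
    exact mul_pos (hApos s) this
  · rw [deriv_flux β γ hβ T, hfac T]
    simp
  · intro s hsT
    rw [deriv_flux β γ hβ s, hfac s]
    have h2 : T ^ 2 - s ^ 2 < 0 := by nlinarith
    have hneg : (2 * (1 - γ)) * (T ^ 2 - s ^ 2) / β ^ 2 < 0 := by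
      apply div_neg_of_neg_of_pos _ hβ2
      exact mul_neg_of_pos_of_neg hγ' h2
    exact mul_neg_of_pos_of_neg (hApos s) hneg
  · intro s hs0 hz
    rw [deriv_flux β γ hβ s, hfac s] at hz
    have h1 : (2 * (1 - γ)) * (T ^ 2 - s ^ 2) / β ^ 2 = 0 :=
      (mul_eq_zero.mp hz).resolve_left (hApos s).ne'
    have h3 : (2 * (1 - γ)) * (T ^ 2 - s ^ 2) = 0 := by
      field_simp at h1; linarith
    have h2 : T ^ 2 - s ^ 2 = 0 := (mul_eq_zero.mp h3).resolve_left hγ'.ne'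
    nlinarith
end

section
/- Let β > 0 and γ > 1, and define λ₁(s) = (1 + s²/β²)^{γ−3/2} and J₁(s) = s·λ₁(s). Then J₁′(s) > 0 for all s ≥ 0; that is, for γ > 1 there is always forward diffusion (smoothing) across edges and backward diffusion never occurs. -/
/-- Pure forward diffusion for `γ > 1`: with flux `J₁(s) = s (1+s²/β²)^{γ-3/2}`, the
across-edge diffusivity `J₁'(s)` is positive for all `s ≥ 0`, so backward diffusion
never occurs. -/
theorem stmt_16 (β γ : ℝ) (hβ : 0 < β) (hγ : 1 < γ)
    (J : ℝ → ℝ) (hJ : J = fun s => s * (1 + s ^ 2 / β ^ 2) ^ (γ - 3/2)) :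
    ∀ s : ℝ, 0 ≤ s → 0 < deriv J s := by
  intro s hs
  have hβ2 : (0:ℝ) < β ^ 2 := by positivity
  set A : ℝ := 1 + s ^ 2 / β ^ 2 with hA
  have hApos : 0 < A := by positivity
  -- inner derivative
  have hg : HasDerivAt (fun x : ℝ => 1 + x ^ 2 / β ^ 2) (2 * s / β ^ 2) s := by
    have := ((hasDerivAt_pow 2 s).div_const (β ^ 2)).const_add 1
    simpa [mul_comm] using this
  have hr : HasDerivAt (fun x : ℝ => x ^ (γ - 3/2)) ((γ - 3/2) * A ^ (γ - 3/2 - 1)) A :=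
    Real.hasDerivAt_rpow_const (Or.inl (ne_of_gt hApos))
  have hcomp : HasDerivAt (fun x : ℝ => (1 + x ^ 2 / β ^ 2) ^ (γ - 3/2))
      ((γ - 3/2) * A ^ (γ - 3/2 - 1) * (2 * s / β ^ 2)) s := by have := hr.comp s hg; exact this
  have hJd : HasDerivAt J
      (1 * A ^ (γ - 3/2) + s * ((γ - 3/2) * A ^ (γ - 3/2 - 1) * (2 * s / β ^ 2))) s := by
    rw [hJ]
    exact (hasDerivAt_id s).mul hcomp
  rw [hJd.deriv]
  have hsplit : A ^ (γ - 3/2) = A * A ^ (γ - 3/2 - 1) := by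
    rw [show γ - 3/2 = 1 + (γ - 3/2 - 1) by ring, Real.rpow_add hApos, Real.rpow_one]; ring_nf
  rw [hsplit]
  have key : 1 * (A * A ^ (γ - 3/2 - 1)) + s * ((γ - 3/2) * A ^ (γ - 3/2 - 1) * (2 * s / β ^ 2))
      = A ^ (γ - 3/2 - 1) * (1 + (2 * γ - 2) * s ^ 2 / β ^ 2) := by
    rw [hA]; field_simp; ring
  rw [key]
  have h1 : 0 < A ^ (γ - 3/2 - 1) := Real.rpow_pos_of_pos hApos _
  have h2 : 0 < 1 + (2 * γ - 2) * s ^ 2 / β ^ 2 := by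
    have : 0 ≤ (2 * γ - 2) * s ^ 2 / β ^ 2 := by
      apply div_nonneg _ (le_of_lt hβ2)
      nlinarith
    linarith
  positivity
end
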